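/- Let X be a standard normal random variable and W a standard exponential random variable, independent of X. Then |X|·√(2W) has the standard exponential distribution: P(|X|·√(2W) ≤ x) = 1 - exp(-x) for all x ≥ 0. Equivalently, the exponential distribution is a scale mixture of half-normal laws. -/

import Mathlib

open MeasureTheory ProbabilityTheory Filter Set
open scoped Topology ENNReal

open Real

section Aux
variable {F : Type*}

lemma img1 {x : ℝ} (hx : 0 < x) : (fun t : ℝ => t - x / t) '' Ioi 0 = univ := by
  ext u
  simp only [mem_univ, iff_true, mem_image, mem_Ioi]
  have h1 : |u| < Real.sqrt (u ^ 2 + 4 * x) := by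
    rw [← Real.sqrt_sq_eq_abs]
    exact Real.sqrt_lt_sqrt (sq_nonneg u) (by linarith)
  have habs := neg_abs_le u
  have ht : 0 < (u + Real.sqrt (u ^ 2 + 4 * x)) / 2 := by linarith
  refine ⟨(u + Real.sqrt (u ^ 2 + 4 * x)) / 2, ht, ?_⟩
  have hs : Real.sqrt (u ^ 2 + 4 * x) ^ 2 = u ^ 2 + 4 * x :=
    Real.sq_sqrt (by positivity)
  have hne : u + Real.sqrt (u ^ 2 + 4 * x) ≠ 0 := by linarith
  field_simp
  nlinarith [hs]

lemma deriv1 {x t : ℝ} (ht : t ∈ Ioi (0:ℝ)) :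
    HasDerivWithinAt (fun t : ℝ => t - x / t) (1 + x / t ^ 2) (Ioi 0) t := by
  have h : HasDerivAt (fun t : ℝ => t - x / t) (1 - (0 * t - x * 1) / t ^ 2) t :=
    (hasDerivAt_id t).sub ((hasDerivAt_const t x).div (hasDerivAt_id t) (ne_of_gt ht))
  have : 1 - (0 * t - x * 1) / t ^ 2 = 1 + x / t ^ 2 := by ring
  exact (this ▸ h).hasDerivWithinAt

lemma inj1 {x : ℝ} (hx : 0 < x) : InjOn (fun t : ℝ => t - x / t) (Ioi 0) := by
  have : StrictMonoOn (fun t : ℝ => t - x / t) (Ioi 0) := by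
    intro a ha b hb hab
    simp only
    have : x / b < x / a := div_lt_div_of_pos_left hx ha hab
    linarith
  exact this.injOn

lemma img2 {x : ℝ} (hx : 0 < x) : (fun t : ℝ => x / t) '' Ioi 0 = Ioi 0 := by
  ext s
  simp only [mem_image, mem_Ioi]
  constructor
  · rintro ⟨t, ht, rfl⟩; positivity
  · intro hs; exact ⟨x / s, by positivity, by field_simp⟩

lemma deriv2 {x t : ℝ} (ht : t ∈ Ioi (0:ℝ)) :
    HasDerivWithinAt (fun t : ℝ => x / t) (-(x / t ^ 2)) (Ioi 0) t := by
  have h : HasDerivAt (fun t : ℝ => x / t) ((0 * t - x * 1) / t ^ 2) t :=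
    (hasDerivAt_const t x).div (hasDerivAt_id t) (ne_of_gt ht)
  have : (0 * t - x * 1) / t ^ 2 = -(x / t ^ 2) := by ring
  exact (this ▸ h).hasDerivWithinAt

lemma inj2 {x : ℝ} (hx : 0 < x) : InjOn (fun t : ℝ => x / t) (Ioi 0) := by
  intro a ha b hb h
  have ha' : a ≠ 0 := ne_of_gt ha
  have hb' : b ≠ 0 := ne_of_gt hb
  have h' : x / a = x / b := h
  rw [div_eq_div_iff ha' hb'] at h'
  exact mul_left_cancel₀ hx.ne' (by linarith [h'])

-- half-line Glasser integral
lemma glasser {x : ℝ} (hx : 0 < x) :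
    ∫ t in Ioi (0:ℝ), Real.exp (-(t - x / t) ^ 2 / 2) = Real.sqrt (2 * π) / 2 := by
  set g : ℝ → ℝ := fun u => Real.exp (-u ^ 2 / 2) with hg
  -- substitution 1
  have h1 : ∫ u : ℝ, g u = ∫ t in Ioi (0:ℝ), |1 + x / t ^ 2| • g (t - x / t) := by
    rw [← setIntegral_univ, ← img1 hx]
    exact integral_image_eq_integral_abs_deriv_smul measurableSet_Ioi
      (fun t ht => deriv1 ht) (inj1 hx) g
  have hgi : Integrable g := by
    have := integrable_exp_neg_mul_sq (by norm_num : (0:ℝ) < 1/2)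
    simpa [hg, neg_div, div_eq_inv_mul, mul_comm] using this
  have habs : ∀ t ∈ Ioi (0:ℝ), |1 + x / t ^ 2| = 1 + x / t ^ 2 := by
    intro t ht
    have : (0:ℝ) < t := ht
    rw [abs_of_pos]; positivity
  -- total integrand integrable on Ioi 0
  have hT : IntegrableOn (fun t => |1 + x / t ^ 2| • g (t - x / t)) (Ioi 0) := by
    rw [← integrableOn_image_iff_integrableOn_abs_deriv_smul measurableSet_Ioi
      (fun t ht => deriv1 ht) (inj1 hx) g, img1 hx]
    exact hgi.integrableOn
  -- g ∘ f integrable on Ioi 0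
  have hmeas : Measurable fun t : ℝ => g (t - x / t) := by
    apply Real.measurable_exp.comp
    exact ((measurable_id.sub (measurable_const.div measurable_id)).pow_const 2).neg.div_const 2
  have hG : IntegrableOn (fun t => g (t - x / t)) (Ioi 0) := by
    refine hT.mono' hmeas.aestronglyMeasurable.restrict ?_
    rw [ae_restrict_iff' measurableSet_Ioi]
    refine ae_of_all _ fun t ht => ?_
    have ht' : (0:ℝ) < t := ht
    have hge : (1:ℝ) ≤ 1 + x / t ^ 2 := by
      have : 0 ≤ x / t ^ 2 := by positivity
      linarith
    have hgpos : 0 < g (t - x / t) := Real.exp_pos _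
    rw [Real.norm_eq_abs, abs_of_pos hgpos, smul_eq_mul, abs_of_pos (by positivity : (0:ℝ) < 1 + x / t ^ 2)]
    nlinarith
  -- remainder integrable
  have hR : IntegrableOn (fun t => (x / t ^ 2) * g (t - x / t)) (Ioi 0) := by
    refine (hT.sub hG).congr ?_
    rw [Filter.EventuallyEq, ae_restrict_iff' measurableSet_Ioi]
    refine ae_of_all _ fun t ht => ?_
    simp only [Pi.sub_apply]
    rw [habs t ht, smul_eq_mul]; ring
  -- substitution 2 : I = ∫ (x/t²) g(f t)
  have h2 : ∫ t in Ioi (0:ℝ), g (t - x / t)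
      = ∫ t in Ioi (0:ℝ), (x / t ^ 2) * g (t - x / t) := by
    have := integral_image_eq_integral_abs_deriv_smul measurableSet_Ioi
      (fun t (ht : t ∈ Ioi (0:ℝ)) => deriv2 (x := x) ht) (inj2 hx)
      (fun s => g (s - x / s))
    rw [img2 hx] at this
    rw [this]
    refine setIntegral_congr_fun measurableSet_Ioi fun t ht => ?_
    have ht' : (0:ℝ) < t := ht
    have hc : x / (x / t) = t := by field_simp
    rw [smul_eq_mul, abs_neg, abs_of_pos (by positivity : (0:ℝ) < x / t ^ 2), hc]
    congr 1
    simp only [hg]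
    congr 1
    ring
  -- combine
  have hsum : ∫ u : ℝ, g u
      = (∫ t in Ioi (0:ℝ), g (t - x / t)) + ∫ t in Ioi (0:ℝ), (x / t ^ 2) * g (t - x / t) := by
    rw [h1, ← integral_add hG hR]
    refine setIntegral_congr_fun measurableSet_Ioi fun t ht => ?_
    rw [habs t ht, smul_eq_mul]; ring
  have hgauss : ∫ u : ℝ, g u = Real.sqrt (2 * π) := by
    have := integral_gaussian (1/2 : ℝ)
    simp only [hg]
    rw [show (fun u : ℝ => Real.exp (-u ^ 2 / 2)) = fun u : ℝ => Real.exp (-(1/2) * u ^ 2) by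
      funext u; ring_nf, this, show (π/(1/2:ℝ)) = 2*π by ring]
  rw [← h2] at hsum
  rw [hgauss] at hsum
  linarith

lemma meas_f (x : ℝ) : Measurable fun t : ℝ => Real.exp (-t ^ 2 / 2 - x ^ 2 / (2 * t ^ 2)) := by
  apply Real.measurable_exp.comp
  exact ((measurable_id.pow_const 2).neg.div_const 2).sub
    (measurable_const.div ((measurable_id.pow_const 2).const_mul 2))

lemma integrable_f (x : ℝ) :
    Integrable fun t : ℝ => Real.exp (-t ^ 2 / 2 - x ^ 2 / (2 * t ^ 2)) := by
  refine (integrable_exp_neg_mul_sq (by norm_num : (0:ℝ) < 1/2)).mono'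
    (meas_f x).aestronglyMeasurable (ae_of_all _ fun t => ?_)
  rw [Real.norm_eq_abs, abs_of_pos (Real.exp_pos _)]
  apply Real.exp_le_exp.2
  have h1 : 0 ≤ x ^ 2 / (2 * t ^ 2) := by positivity
  nlinarith

lemma halfline {x : ℝ} (hx : 0 ≤ x) :
    ∫ t in Ioi (0:ℝ), Real.exp (-t ^ 2 / 2 - x ^ 2 / (2 * t ^ 2))
      = Real.sqrt (2 * π) / 2 * Real.exp (-x) := by
  rcases eq_or_lt_of_le hx with rfl | hx'
  · simp only [ne_eq, OfNat.ofNat_ne_zero, not_false_eq_true, zero_pow, zero_div, sub_zero,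
      neg_zero, Real.exp_zero, mul_one]
    have := integral_gaussian_Ioi (1/2 : ℝ)
    rw [show (fun t : ℝ => Real.exp (-t ^ 2 / 2)) = fun t : ℝ => Real.exp (-(1/2) * t ^ 2) by
      funext t; ring_nf, this, show (π/(1/2:ℝ)) = 2*π by ring]
  · have hcongr : ∀ t ∈ Ioi (0:ℝ),
        Real.exp (-t ^ 2 / 2 - x ^ 2 / (2 * t ^ 2))
          = Real.exp (-x) * Real.exp (-(t - x / t) ^ 2 / 2) := by
      intro t ht
      have ht' : (0:ℝ) < t := ht
      rw [← Real.exp_add]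
      congr 1
      field_simp
      ring
    rw [setIntegral_congr_fun measurableSet_Ioi hcongr, integral_const_mul, glasser hx']
    ring

lemma fullline {x : ℝ} (hx : 0 ≤ x) :
    ∫ t : ℝ, Real.exp (-t ^ 2 / 2 - x ^ 2 / (2 * t ^ 2))
      = Real.sqrt (2 * π) * Real.exp (-x) := by
  set f : ℝ → ℝ := fun t => Real.exp (-t ^ 2 / 2 - x ^ 2 / (2 * t ^ 2)) with hf
  have hint := integrable_f x
  have hsplit : ∫ t : ℝ, f t = (∫ t in Iic (0:ℝ), f t) + ∫ t in Ioi (0:ℝ), f t :=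
    (intervalIntegral.integral_Iic_add_Ioi hint.integrableOn hint.integrableOn).symm
  have heven : ∫ t in Iic (0:ℝ), f t = ∫ t in Ioi (0:ℝ), f t := by
    rw [show Iic (0:ℝ) = Iic (-0) by norm_num, ← integral_comp_neg_Ioi]
    refine setIntegral_congr_fun measurableSet_Ioi fun t ht => ?_
    simp only [hf]
    ring_nf
  rw [hsplit, heven, halfline hx]
  ring

open ProbabilityTheory in
lemma pdf_mul_exp_eq (x : ℝ) : ∀ t : ℝ,
    gaussianPDFReal 0 1 t * Real.exp (-(x ^ 2 / (2 * t ^ 2)))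
      = (Real.sqrt (2 * π))⁻¹ * Real.exp (-t ^ 2 / 2 - x ^ 2 / (2 * t ^ 2)) := by
  intro t
  rw [gaussianPDFReal]
  simp only [NNReal.coe_one, mul_one, sub_zero]
  rw [mul_assoc, ← Real.exp_add]
  norm_num
  left
  ring

open ProbabilityTheory in
lemma integrable_pdf_mul_exp (x : ℝ) :
    Integrable fun t : ℝ => gaussianPDFReal 0 1 t * Real.exp (-(x ^ 2 / (2 * t ^ 2))) := by
  refine (integrable_gaussianPDFReal 0 1).mono'
    ((measurable_gaussianPDFReal 0 1).mul (Real.measurable_exp.comp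
      ((measurable_const.div ((measurable_id.pow_const 2).const_mul 2)).neg))).aestronglyMeasurable
    (ae_of_all _ fun t => ?_)
  rw [Real.norm_eq_abs, abs_of_nonneg (mul_nonneg (gaussianPDFReal_nonneg 0 1 t) (Real.exp_pos _).le)]
  have h1 : Real.exp (-(x ^ 2 / (2 * t ^ 2))) ≤ 1 := by
    exact Real.exp_le_one_iff.2 (neg_nonpos.2 (by positivity))
  nlinarith [gaussianPDFReal_nonneg 0 1 t, Real.exp_pos (-(x ^ 2 / (2 * t ^ 2)))]

open ProbabilityTheory in
lemma gauss_exp {x : ℝ} (hx : 0 ≤ x) :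
    ∫ t : ℝ, gaussianPDFReal 0 1 t * Real.exp (-(x ^ 2 / (2 * t ^ 2))) = Real.exp (-x) := by
  simp_rw [pdf_mul_exp_eq x]
  rw [integral_const_mul, fullline hx, ← mul_assoc,
    inv_mul_cancel₀ (by positivity : Real.sqrt (2 * π) ≠ 0), one_mul]

open ProbabilityTheory in
lemma gauss_lint {x : ℝ} (hx : 0 ≤ x) :
    ∫⁻ t : ℝ, ENNReal.ofReal (1 - Real.exp (-(x ^ 2 / (2 * t ^ 2)))) ∂(gaussianReal 0 1)
      = ENNReal.ofReal (1 - Real.exp (-x)) := by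
  have hmeas : Measurable fun t : ℝ => ENNReal.ofReal (1 - Real.exp (-(x ^ 2 / (2 * t ^ 2)))) :=
    (measurable_const.sub (Real.measurable_exp.comp
      ((measurable_const.div ((measurable_id.pow_const 2).const_mul 2)).neg))).ennreal_ofReal
  rw [gaussianReal_of_var_ne_zero 0 one_ne_zero,
    lintegral_withDensity_eq_lintegral_mul _ (measurable_gaussianPDF 0 1) hmeas]
  have heq : ∀ t : ℝ, (gaussianPDF 0 1 * fun t => ENNReal.ofReal (1 - Real.exp (-(x ^ 2 / (2 * t ^ 2))))) t
      = ENNReal.ofReal (gaussianPDFReal 0 1 t * (1 - Real.exp (-(x ^ 2 / (2 * t ^ 2))))) := by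
    intro t
    simp only [Pi.mul_apply, gaussianPDF]
    rw [← ENNReal.ofReal_mul (gaussianPDFReal_nonneg 0 1 t)]
  simp_rw [heq]
  have hint : Integrable fun t : ℝ => gaussianPDFReal 0 1 t * (1 - Real.exp (-(x ^ 2 / (2 * t ^ 2)))) := by
    simp_rw [mul_sub, mul_one]
    exact (integrable_gaussianPDFReal 0 1).sub (integrable_pdf_mul_exp x)
  rw [← ofReal_integral_eq_lintegral_ofReal hint (ae_of_all _ fun t => ?_)]
  · congr 1
    have : ∀ t : ℝ, gaussianPDFReal 0 1 t * (1 - Real.exp (-(x ^ 2 / (2 * t ^ 2))))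
        = gaussianPDFReal 0 1 t - gaussianPDFReal 0 1 t * Real.exp (-(x ^ 2 / (2 * t ^ 2))) := by
      intro t; ring
    simp_rw [this]
    rw [integral_sub (integrable_gaussianPDFReal 0 1) (integrable_pdf_mul_exp x),
      integral_gaussianPDFReal_eq_one 0 one_ne_zero, gauss_exp hx]
  · have h1 : Real.exp (-(x ^ 2 / (2 * t ^ 2))) ≤ 1 := by
      exact Real.exp_le_one_iff.2 (neg_nonpos.2 (by positivity))
    have := gaussianPDFReal_nonneg 0 1 t
    simp only [Pi.zero_apply]
    nlinarith

end Aux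

/-- If `X` is a standard normal random variable and `W` is an independent
standard exponential random variable, then `|X|·√(2W)` has the standard exponential
distribution: `P(|X|·√(2W) ≤ x) = 1 - exp (-x)` for all `x ≥ 0`. Equivalently, the
exponential distribution is a scale mixture of half-normal laws. -/
theorem exponential_is_halfnormal_scale_mixture
    {Ω : Type*} [MeasurableSpace Ω] (P : Measure Ω) [IsProbabilityMeasure P]
    (X W : Ω → ℝ) (hXm : Measurable X) (hWm : Measurable W)
    (hX : Measure.map X P = gaussianReal 0 1)
    (hW : ∀ x : ℝ, 0 ≤ x → P {ω | x < W ω} = ENNReal.ofReal (Real.exp (-x)))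
    (hindep : IndepFun X W P) :
    ∀ x : ℝ, 0 ≤ x →
      P {ω | |X ω| * Real.sqrt (2 * W ω) ≤ x} = ENNReal.ofReal (1 - Real.exp (-x)) := by
  intro x hx
  set ν : Measure ℝ := Measure.map W P with hν
  have hνprob : IsProbabilityMeasure ν := Measure.isProbabilityMeasure_map hWm.aemeasurable
  have hνIoi : ∀ c : ℝ, 0 ≤ c → ν (Ioi c) = ENNReal.ofReal (Real.exp (-c)) := by
    intro c hc
    rw [hν, Measure.map_apply hWm measurableSet_Ioi]
    exact hW c hc
  have hνIic : ∀ c : ℝ, 0 ≤ c → ν (Iic c) = ENNReal.ofReal (1 - Real.exp (-c)) := by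
    intro c hc
    have hcompl : Iic c = (Ioi c)ᶜ := by simp
    rw [hcompl, measure_compl measurableSet_Ioi (measure_ne_top _ _), hνIoi c hc,
      measure_univ, ← ENNReal.ofReal_one, ← ENNReal.ofReal_sub _ (Real.exp_nonneg _)]
  have hA : MeasurableSet {p : ℝ × ℝ | |p.1| * Real.sqrt (2 * p.2) ≤ x} :=
    measurableSet_le (measurable_fst.abs.mul (measurable_snd.const_mul 2).sqrt) measurable_const
  have hmap : Measure.map (fun ω => (X ω, W ω)) P = (gaussianReal 0 1).prod ν := by
    rw [← hX, hν]
    exact (indepFun_iff_map_prod_eq_prod_map_map hXm.aemeasurable hWm.aemeasurable).mp hindep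
  have hev : {ω | |X ω| * Real.sqrt (2 * W ω) ≤ x}
      = (fun ω => (X ω, W ω)) ⁻¹' {p : ℝ × ℝ | |p.1| * Real.sqrt (2 * p.2) ≤ x} := rfl
  rw [hev, ← Measure.map_apply (hXm.prodMk hWm) hA, hmap, Measure.prod_apply hA]
  have hne : ∀ᵐ t ∂(gaussianReal 0 1), t ≠ 0 := by
    rw [ae_iff]
    simp only [ne_eq, not_not, setOf_eq_eq_singleton]
    exact gaussianReal_absolutelyContinuous 0 one_ne_zero volume_singleton
  have hae : ∀ᵐ t ∂(gaussianReal 0 1),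
      ν (Prod.mk t ⁻¹' {p : ℝ × ℝ | |p.1| * Real.sqrt (2 * p.2) ≤ x})
        = ENNReal.ofReal (1 - Real.exp (-(x ^ 2 / (2 * t ^ 2)))) := by
    filter_upwards [hne] with t ht
    have habs : (0:ℝ) < |t| := abs_pos.2 ht
    have hsec : Prod.mk t ⁻¹' {p : ℝ × ℝ | |p.1| * Real.sqrt (2 * p.2) ≤ x}
        = Iic (x ^ 2 / (2 * t ^ 2)) := by
      ext w
      simp only [mem_preimage, mem_setOf_eq, mem_Iic]
      rw [mul_comm, ← le_div_iff₀ habs, Real.sqrt_le_iff]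
      constructor
      · rintro ⟨-, h⟩
        rw [div_pow, sq_abs] at h
        rw [le_div_iff₀ (by positivity : (0:ℝ) < t ^ 2)] at h
        rw [le_div_iff₀ (by positivity : (0:ℝ) < 2 * t ^ 2)]
        nlinarith [h]
      · intro h
        refine ⟨by positivity, ?_⟩
        rw [div_pow, sq_abs, le_div_iff₀ (by positivity : (0:ℝ) < t ^ 2)]
        rw [le_div_iff₀ (by positivity : (0:ℝ) < 2 * t ^ 2)] at h
        nlinarith [h]
    rw [hsec, hνIic _ (by positivity)]
  rw [lintegral_congr_ae hae, gauss_lint hx]
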